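/- Let H be a monoid and x ∈ H \ {1_H} with x² = 1_H or x² = x. Then {1_H, x} cannot be written as a product of atoms in P_{fin,1}(H); in fact, the only way to write {1_H, x} as a product of two non-unit elements of P_{fin,1}(H) is {1_H, x} = {1_H, x}·{1_H, x}. -/
import Mathlib


open Pointwise

/-- `A` is an atom of the reduced power monoid `P_{fin,1}(H)`. -/
def IsAtomPow1 {H : Type*} [Monoid H] [DecidableEq H] (A : Finset H) : Prop :=
  (1 : H) ∈ A ∧ A ≠ {1} ∧
    ∀ Y Z : Finset H, (1 : H) ∈ Y → (1 : H) ∈ Z → A = Y * Z → Y = {1} ∨ Z = {1}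

private lemma eq_pair_of_subset {H : Type*} [Monoid H] [DecidableEq H] {x : H}
    {Y : Finset H} (h1 : (1 : H) ∈ Y) (hne : Y ≠ {1})
    (hsub : Y ⊆ ({(1 : H), x} : Finset H)) : Y = ({(1 : H), x} : Finset H) := by
  have hxY : x ∈ Y := by
    by_contra hxY
    apply hne
    ext a
    simp only [Finset.mem_singleton]
    constructor
    · intro ha
      have := hsub ha
      simp only [Finset.mem_insert, Finset.mem_singleton] at this
      rcases this with h | h
      · exact h
      · exact absurd (h ▸ ha) hxY
    · rintro rfl; exact h1
  apply Finset.Subset.antisymm hsub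
  intro a ha
  simp only [Finset.mem_insert, Finset.mem_singleton] at ha
  rcases ha with rfl | rfl
  · exact h1
  · exact hxY

private lemma one_mem_list_prod {H : Type*} [Monoid H] [DecidableEq H]
    (L : List (Finset H)) (hL : ∀ A ∈ L, (1 : H) ∈ A) : (1 : H) ∈ L.prod := by
  induction L with
  | nil => simp
  | cons A rest ih =>
      rw [List.prod_cons]
      have h1 : (1 : H) * 1 = 1 := one_mul 1
      exact h1 ▸ Finset.mul_mem_mul (hL A (by simp)) (ih fun B hB => hL B (by simp [hB]))

theorem no_atomic_factorization_of_idempotent_or_involution {H : Type*} [Monoid H] [DecidableEq H]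
    (x : H) (hx : x ≠ 1) (h : x ^ 2 = 1 ∨ x ^ 2 = x) :
    (∀ L : List (Finset H), (∀ A ∈ L, IsAtomPow1 A) →
        L.prod ≠ ({(1 : H), x} : Finset H)) ∧
    (∀ Y Z : Finset H, (1 : H) ∈ Y → (1 : H) ∈ Z → Y ≠ {1} → Z ≠ {1} →
        ({(1 : H), x} : Finset H) = Y * Z →
        Y = ({(1 : H), x} : Finset H) ∧ Z = ({(1 : H), x} : Finset H)) := by
  have hxx : x * x = 1 ∨ x * x = x := by rwa [← sq]
  have hpair : ({(1 : H), x} : Finset H) * {(1 : H), x} = {(1 : H), x} := by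
    apply Finset.Subset.antisymm
    · intro a ha
      rw [Finset.mem_mul] at ha
      obtain ⟨y, hy, z, hz, rfl⟩ := ha
      simp only [Finset.mem_insert, Finset.mem_singleton] at hy hz ⊢
      rcases hy with rfl | hy <;> rcases hz with rfl | hz
      · left; exact one_mul 1
      · right; rw [hz]; exact one_mul x
      · right; rw [hy]; exact mul_one x
      · rw [hy, hz]
        rcases hxx with h' | h'
        · left; exact h'
        · right; exact h'
    · exact Finset.subset_mul_left _ (by simp)
  have key2 : ∀ Y Z : Finset H, (1 : H) ∈ Y → (1 : H) ∈ Z → Y ≠ {1} → Z ≠ {1} →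
      ({(1 : H), x} : Finset H) = Y * Z →
      Y = ({(1 : H), x} : Finset H) ∧ Z = ({(1 : H), x} : Finset H) := by
    intro Y Z hY hZ hYne hZne heq
    have hYsub : Y ⊆ ({(1 : H), x} : Finset H) := heq ▸ Finset.subset_mul_left _ hZ
    have hZsub : Z ⊆ ({(1 : H), x} : Finset H) := heq ▸ Finset.subset_mul_right _ hY
    exact ⟨eq_pair_of_subset hY hYne hYsub, eq_pair_of_subset hZ hZne hZsub⟩
  have hnotatom : ¬ IsAtomPow1 ({(1 : H), x} : Finset H) := by
    rintro ⟨_, hne, hsplit⟩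
    rcases hsplit {(1 : H), x} {(1 : H), x} (by simp) (by simp) hpair.symm with h' | h' <;>
      exact hne h'
  refine ⟨?_, key2⟩
  intro L hL hprod
  match L with
  | [] =>
      rw [List.prod_nil] at hprod
      have : x ∈ (1 : Finset H) := hprod ▸ (by simp : x ∈ ({(1 : H), x} : Finset H))
      simp only [Finset.mem_one] at this
      exact hx this
  | [A] =>
      rw [List.prod_singleton] at hprod
      exact hnotatom (hprod ▸ hL A (by simp))
  | A :: B :: rest =>
      rw [List.prod_cons] at hprod
      have hA := hL A (by simp)
      have hrest : ∀ C ∈ B :: rest, IsAtomPow1 C := fun C hC => hL C (by simp [hC])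
      have h1rest : (1 : H) ∈ (B :: rest).prod :=
        one_mem_list_prod _ fun C hC => (hrest C hC).1
      have hrestne : (B :: rest).prod ≠ {1} := by
        intro hcontra
        have hBsub : B ⊆ (B :: rest).prod := by
          rw [List.prod_cons]
          exact Finset.subset_mul_left _ (one_mem_list_prod _ fun C hC => (hrest C (by simp [hC])).1)
        apply (hrest B (by simp)).2.1
        apply Finset.Subset.antisymm (hcontra ▸ hBsub)
        intro a ha
        simp only [Finset.mem_singleton] at ha
        exact ha ▸ (hrest B (by simp)).1
      have hAne : A ≠ {1} := hA.2.1
      obtain ⟨hAeq, _⟩ := key2 A (B :: rest).prod hA.1 h1rest hAne hrestne hprod.symm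
      exact hnotatom (hAeq ▸ hA)
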